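/- Given n ≥ 2k and two rank-k orthogonal projectors P, Q on R^n with principal angles θ_1,…,θ_k, there exists an orthogonal matrix R such that RᵀPR projects onto span(e_1,…,e_k) and RᵀQR projects onto the span of the vectors cos(θ_i)e_i + sin(θ_i)e_{k+i}, i = 1,…,k. -/

import Mathlib

open Matrix Real

/-- CS-decomposition form: for n ≥ 2k and rank-k orthogonal projectors P, Q with
    principal angles θ₁,…,θ_k, there is an orthogonal R with RᵀPR the projector
    onto span(e₁,…,e_k) and RᵀQR the projector onto
    span(cos θᵢ eᵢ + sin θᵢ e_{k+i}, i = 1,…,k). -/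
theorem stmt_12 (n k : ℕ) (hnk : 2 * k ≤ n)
    (P Q : Matrix (Fin n) (Fin n) ℝ)
    (hPsym : P.IsSymm) (hQsym : Q.IsSymm) (hPidem : P * P = P) (hQidem : Q * Q = Q)
    (U V : Matrix (Fin n) (Fin k) ℝ)
    (hU : Uᵀ * U = 1) (hV : Vᵀ * V = 1) (hP : P = U * Uᵀ) (hQ : Q = V * Vᵀ)
    (θ : Fin k → ℝ) (hθ : ∀ i, θ i ∈ Set.Icc 0 (Real.pi / 2))
    (W₁ W₂ : Matrix (Fin k) (Fin k) ℝ)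
    (hW₁ : W₁ ∈ Matrix.orthogonalGroup (Fin k) ℝ)
    (hW₂ : W₂ ∈ Matrix.orthogonalGroup (Fin k) ℝ)
    (hsvd : Uᵀ * V = W₁ * Matrix.diagonal (fun i => Real.cos (θ i)) * W₂ᵀ) :
    ∃ R : Matrix (Fin n) (Fin n) ℝ, R ∈ Matrix.orthogonalGroup (Fin n) ℝ ∧
      -- RᵀPR = E Eᵀ, the projector onto span(e₁,…,e_k), where E i j = δ_{i,j} for j < k
      (letI E : Matrix (Fin n) (Fin k) ℝ :=
        Matrix.of fun i j => if (i : ℕ) = (j : ℕ) then (1 : ℝ) else 0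
       letI W : Matrix (Fin n) (Fin k) ℝ :=
        Matrix.of fun i j =>
          if (i : ℕ) = (j : ℕ) then Real.cos (θ j)
          else if (i : ℕ) = k + (j : ℕ) then Real.sin (θ j) else 0
       Rᵀ * P * R = E * Eᵀ ∧ Rᵀ * Q * R = W * Wᵀ) := by
  -- orthogonal group facts
  have hkn : k ≤ n := le_trans (by omega) hnk
  have hW₁₁ : W₁ᵀ * W₁ = 1 := by
    have := Matrix.mem_orthogonalGroup_iff' (Fin k) ℝ |>.mp hW₁
    simpa [Matrix.star_eq_conjTranspose, Matrix.conjTranspose] using this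
  have hW₁₂ : W₁ * W₁ᵀ = 1 := by
    have := Matrix.mem_orthogonalGroup_iff (Fin k) ℝ |>.mp hW₁
    simpa [Matrix.star_eq_conjTranspose, Matrix.conjTranspose] using this
  have hW₂₁ : W₂ᵀ * W₂ = 1 := by
    have := Matrix.mem_orthogonalGroup_iff' (Fin k) ℝ |>.mp hW₂
    simpa [Matrix.star_eq_conjTranspose, Matrix.conjTranspose] using this
  have hW₂₂ : W₂ * W₂ᵀ = 1 := by
    have := Matrix.mem_orthogonalGroup_iff (Fin k) ℝ |>.mp hW₂
    simpa [Matrix.star_eq_conjTranspose, Matrix.conjTranspose] using this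
  set U' : Matrix (Fin n) (Fin k) ℝ := U * W₁ with hU'def
  set V' : Matrix (Fin n) (Fin k) ℝ := V * W₂ with hV'def
  set C : Matrix (Fin k) (Fin k) ℝ := Matrix.diagonal (fun i => Real.cos (θ i)) with hCdef
  have hU' : U'ᵀ * U' = 1 := by
    rw [hU'def, Matrix.transpose_mul]
    calc W₁ᵀ * Uᵀ * (U * W₁) = W₁ᵀ * (Uᵀ * U) * W₁ := by
          simp only [Matrix.mul_assoc]
      _ = 1 := by rw [hU]; simpa using hW₁₁
  have hV'V' : V'ᵀ * V' = 1 := by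
    rw [hV'def, Matrix.transpose_mul]
    calc W₂ᵀ * Vᵀ * (V * W₂) = W₂ᵀ * (Vᵀ * V) * W₂ := by
          simp only [Matrix.mul_assoc]
      _ = 1 := by rw [hV]; simpa using hW₂₁
  have hUV : U'ᵀ * V' = C := by
    rw [hU'def, hV'def, Matrix.transpose_mul]
    calc W₁ᵀ * Uᵀ * (V * W₂) = W₁ᵀ * (Uᵀ * V) * W₂ := by simp only [Matrix.mul_assoc]
      _ = W₁ᵀ * (W₁ * C * W₂ᵀ) * W₂ := by rw [hsvd]
      _ = (W₁ᵀ * W₁) * C * (W₂ᵀ * W₂) := by simp only [Matrix.mul_assoc]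
      _ = C := by rw [hW₁₁, hW₂₁, Matrix.one_mul, Matrix.mul_one]
  have hCT : Cᵀ = C := Matrix.diagonal_transpose _
  have hVU : V'ᵀ * U' = C := by
    have := congrArg Matrix.transpose hUV
    rwa [Matrix.transpose_mul, Matrix.transpose_transpose, hCT] at this
  set M : Matrix (Fin n) (Fin k) ℝ := V' - U' * C with hMdef
  set D : Matrix (Fin k) (Fin k) ℝ :=
    Matrix.diagonal (fun i => if Real.sin (θ i) = 0 then 0 else (Real.sin (θ i))⁻¹) with hDdef
  set X : Matrix (Fin n) (Fin k) ℝ := M * D with hXdef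
  have hUM : U'ᵀ * M = 0 := by
    rw [hMdef, Matrix.mul_sub, hUV, ← Matrix.mul_assoc, hU', Matrix.one_mul, sub_self]
  have hUX : U'ᵀ * X = 0 := by rw [hXdef, ← Matrix.mul_assoc, hUM, Matrix.zero_mul]
  have hMM : Mᵀ * M = Matrix.diagonal (fun i => Real.sin (θ i) ^ 2) := by
    rw [hMdef]
    have expand : (V' - U' * C)ᵀ * (V' - U' * C)
        = V'ᵀ * V' - (V'ᵀ * U') * C - Cᵀ * (U'ᵀ * V') + Cᵀ * (U'ᵀ * U') * C := by
      simp only [Matrix.transpose_sub, Matrix.transpose_mul, Matrix.sub_mul, Matrix.mul_sub,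
        Matrix.mul_assoc]
      abel
    rw [expand, hV'V', hVU, hUV, hU', hCT, Matrix.mul_one]
    ext i j
    rcases eq_or_ne i j with rfl | hij
    · simp [hCdef, Matrix.mul_apply, Matrix.diagonal, Real.sin_sq]
      ring
    · simp [hCdef, Matrix.diagonal_mul_diagonal, Matrix.one_apply_ne hij,
        Matrix.diagonal_apply_ne _ hij]
  have hXX : Xᵀ * X = Matrix.diagonal (fun i => if Real.sin (θ i) = 0 then 0 else 1) := by
    rw [hXdef, Matrix.transpose_mul, Matrix.mul_assoc, ← Matrix.mul_assoc Mᵀ, hMM, hDdef,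
      Matrix.diagonal_transpose, Matrix.diagonal_mul_diagonal, Matrix.diagonal_mul_diagonal]
    apply congrArg Matrix.diagonal
    funext i
    rcases eq_or_ne (Real.sin (θ i)) 0 with h | h
    · simp [h]
    · rw [if_neg h, if_neg h]
      field_simp
  have hMzero : ∀ j : Fin k, Real.sin (θ j) = 0 → ∀ i, M i j = 0 := by
    intro j hj i
    have h1 : (Mᵀ * M) j j = 0 := by rw [hMM]; simp [hj]
    have h2 : ∑ l, M l j ^ 2 = 0 := by
      rw [← h1, Matrix.mul_apply]
      simp [sq, Matrix.transpose_apply]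
    have := (Finset.sum_eq_zero_iff_of_nonneg (fun l _ => sq_nonneg (M l j))).mp h2 i
      (Finset.mem_univ i)
    exact pow_eq_zero_iff two_ne_zero |>.mp this
  classical
  -- embeddings of indices
  set j₁ : Fin k → Fin n := fun j => ⟨(j : ℕ), lt_of_lt_of_le j.2 hkn⟩ with hj₁def
  set j₂ : Fin k → Fin n := fun j => ⟨k + (j : ℕ), by have := j.2; omega⟩ with hj₂def
  -- candidate orthonormal family
  set v : Fin n → EuclideanSpace ℝ (Fin n) := fun l => WithLp.toLp 2 (fun i =>
    if h : (l : ℕ) < k then U' i ⟨(l : ℕ), h⟩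
    else if h2 : (l : ℕ) - k < k then X i ⟨(l : ℕ) - k, h2⟩ else 0) with hvdef
  set s : Set (Fin n) := Set.range j₁ ∪ j₂ '' {j | Real.sin (θ j) ≠ 0} with hsdef
  have hj₁s : ∀ j : Fin k, j₁ j ∈ s := fun j => Or.inl ⟨j, rfl⟩
  have hj₂s : ∀ j : Fin k, Real.sin (θ j) ≠ 0 → j₂ j ∈ s := fun j hj => Or.inr ⟨j, hj, rfl⟩
  have hv₁ : ∀ (j : Fin k) (i : Fin n), v (j₁ j) i = U' i j := by
    intro j i
    simp only [hvdef, hj₁def, PiLp.toLp_apply]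
    rw [dif_pos j.2]
  have hv₂ : ∀ (j : Fin k) (i : Fin n), v (j₂ j) i = X i j := by
    intro j i
    simp only [hvdef, hj₂def, PiLp.toLp_apply]
    rw [dif_neg (by omega), dif_pos (by simpa using j.2)]
    congr 1
    exact Fin.ext (by simp)
  -- inner products as matrix entries
  have hinner : ∀ a b : Fin n, a ∈ s → b ∈ s →
      (∑ i, v a i * v b i) = if a = b then 1 else 0 := by
    intro a b ha hb
    rcases ha with ⟨p, rfl⟩ | ⟨p, hp, rfl⟩ <;> rcases hb with ⟨q, rfl⟩ | ⟨q, hq, rfl⟩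
    · have : (∑ i, v (j₁ p) i * v (j₁ q) i) = (U'ᵀ * U') p q := by
        rw [Matrix.mul_apply]
        exact Finset.sum_congr rfl fun i _ => by rw [hv₁, hv₁, Matrix.transpose_apply]
      rw [this, hU']
      have hpq : (j₁ p = j₁ q) ↔ (p = q) := by
        constructor
        · intro h; exact Fin.ext (by simpa [hj₁def, Fin.ext_iff] using h)
        · rintro rfl; rfl
      by_cases h : p = q
      · subst h; simp [Matrix.one_apply]
      · rw [if_neg (fun hc => h (hpq.mp hc)), Matrix.one_apply_ne h]
    · have : (∑ i, v (j₁ p) i * v (j₂ q) i) = (U'ᵀ * X) p q := by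
        rw [Matrix.mul_apply]
        exact Finset.sum_congr rfl fun i _ => by rw [hv₁, hv₂, Matrix.transpose_apply]
      rw [this, hUX]
      have hne : j₁ p ≠ j₂ q := by
        intro h
        have := congrArg (Fin.val) h
        simp [hj₁def, hj₂def] at this
        have := p.2; omega
      rw [if_neg hne]; rfl
    · have : (∑ i, v (j₂ p) i * v (j₁ q) i) = (Xᵀ * U') p q := by
        rw [Matrix.mul_apply]
        exact Finset.sum_congr rfl fun i _ => by rw [hv₂, hv₁, Matrix.transpose_apply]
      rw [this]
      have hXU : Xᵀ * U' = 0 := by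
        have := congrArg Matrix.transpose hUX
        rwa [Matrix.transpose_mul, Matrix.transpose_transpose, Matrix.transpose_zero] at this
      rw [hXU]
      have hne : j₂ p ≠ j₁ q := by
        intro h
        have := congrArg (Fin.val) h
        simp [hj₁def, hj₂def] at this
        have := q.2; omega
      rw [if_neg hne]; rfl
    · have : (∑ i, v (j₂ p) i * v (j₂ q) i) = (Xᵀ * X) p q := by
        rw [Matrix.mul_apply]
        exact Finset.sum_congr rfl fun i _ => by rw [hv₂, hv₂, Matrix.transpose_apply]
      rw [this, hXX]
      have hpq : (j₂ p = j₂ q) ↔ (p = q) := by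
        constructor
        · intro h; exact Fin.ext (by simpa [hj₂def, Fin.ext_iff] using h)
        · rintro rfl; rfl
      by_cases h : p = q
      · subst h
        rw [if_pos rfl, Matrix.diagonal_apply_eq, if_neg hp]
      · rw [if_neg (fun hc => h (hpq.mp hc)), Matrix.diagonal_apply_ne _ h]
  have hon : Orthonormal ℝ (s.restrict v) := by
    rw [orthonormal_iff_ite]
    rintro ⟨a, ha⟩ ⟨c, hc⟩
    have : (inner ℝ (s.restrict v ⟨a, ha⟩) (s.restrict v ⟨c, hc⟩) : ℝ)
        = ∑ i, v a i * v c i := by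
      simp [Set.restrict, PiLp.inner_apply, RCLike.inner_apply, conj_trivial]
      exact Finset.sum_congr rfl fun _ _ => mul_comm _ _
    rw [this, hinner a c ha hc]
    by_cases h : a = c
    · subst h; simp
    · rw [if_neg h, if_neg (by simpa [Subtype.ext_iff] using h)]
  obtain ⟨b, hb⟩ := hon.exists_orthonormalBasis_extension_of_card_eq (by simp)
  set R : Matrix (Fin n) (Fin n) ℝ := Matrix.of (fun i l => b l i) with hRdef
  have hRR : Rᵀ * R = 1 := by
    ext a c
    rw [Matrix.mul_apply]
    have h1 : (∑ i, Rᵀ a i * R i c) = (inner ℝ (b a) (b c) : ℝ) := by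
      simp [hRdef, PiLp.inner_apply, RCLike.inner_apply, conj_trivial, Matrix.transpose_apply]
      exact Finset.sum_congr rfl fun _ _ => mul_comm _ _
    rw [h1, orthonormal_iff_ite.mp b.orthonormal a c, Matrix.one_apply]
  have hmem : R ∈ Matrix.orthogonalGroup (Fin n) ℝ := by
    rw [Matrix.mem_orthogonalGroup_iff' (Fin n) ℝ]
    have hstar : star R = Rᵀ := by
      ext i j; simp [Matrix.star_apply]
    exact hRR
  have hbv : ∀ l ∈ s, ∀ i, b l i = v l i := fun l hl i => by rw [hb l hl]
  set EE : Matrix (Fin n) (Fin k) ℝ :=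
    Matrix.of (fun i j => if (i : ℕ) = (j : ℕ) then (1 : ℝ) else 0) with hEEdef
  set WW : Matrix (Fin n) (Fin k) ℝ :=
    Matrix.of (fun i j =>
      if (i : ℕ) = (j : ℕ) then Real.cos (θ j)
      else if (i : ℕ) = k + (j : ℕ) then Real.sin (θ j) else 0) with hWWdef
  have hRE : R * EE = U' := by
    ext i j
    rw [Matrix.mul_apply]
    have hpt : ∀ l : Fin n, R i l * EE l j = if l = j₁ j then R i l else 0 := by
      intro l
      by_cases h : l = j₁ j
      · subst h; simp [hEEdef, hj₁def]
      · have hne : ¬ ((l : ℕ) = (j : ℕ)) := fun hc => h (Fin.ext (by simp [hj₁def, hc]))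
        simp [hEEdef, hne, h]
    rw [Finset.sum_congr rfl (fun l _ => hpt l),
      Finset.sum_ite_eq' Finset.univ (j₁ j) (fun l => R i l)]
    simp only [Finset.mem_univ, if_true]
    have : R i (j₁ j) = v (j₁ j) i := hbv (j₁ j) (hj₁s j) i
    rw [hRdef] at this ⊢
    simpa [this] using hv₁ j i
  have hRW : R * WW = V' := by
    ext i j
    rw [Matrix.mul_apply]
    have hjk : (j : ℕ) < k := j.2
    have hpt : ∀ l : Fin n, R i l * WW l j =
        (if l = j₁ j then R i l * Real.cos (θ j) else 0)
        + (if l = j₂ j then R i l * Real.sin (θ j) else 0) := by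
      intro l
      have hWWapp : ∀ l : Fin n, WW l j =
          if (l : ℕ) = (j : ℕ) then Real.cos (θ j)
          else if (l : ℕ) = k + (j : ℕ) then Real.sin (θ j) else 0 := fun _ => rfl
      by_cases h1 : l = j₁ j
      · subst h1
        have hne : j₁ j ≠ j₂ j := by
          intro hc
          have hvv : (j : ℕ) = k + (j : ℕ) := congrArg Fin.val hc
          omega
        have hval : WW (j₁ j) j = Real.cos (θ j) := by
          rw [hWWapp]; exact if_pos rfl
        rw [hval, if_pos rfl, if_neg hne]; ring
      · by_cases h2 : l = j₂ j
        · subst h2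
          have hne1 : ¬ ((j₂ j : ℕ) = (j : ℕ)) := by
            show ¬ (k + (j : ℕ) = (j : ℕ)); omega
          have hval : WW (j₂ j) j = Real.sin (θ j) := by
            rw [hWWapp, if_neg hne1]; exact if_pos rfl
          rw [hval, if_neg h1, if_pos rfl]; ring
        · have hne1 : ¬ ((l : ℕ) = (j : ℕ)) := fun hc => h1 (Fin.ext hc)
          have hne2 : ¬ ((l : ℕ) = k + (j : ℕ)) := fun hc => h2 (Fin.ext hc)
          rw [hWWapp, if_neg hne1, if_neg hne2, if_neg h1, if_neg h2]; ring
    rw [Finset.sum_congr rfl (fun l _ => hpt l), Finset.sum_add_distrib,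
      Finset.sum_ite_eq' Finset.univ (j₁ j) (fun l => R i l * Real.cos (θ j)),
      Finset.sum_ite_eq' Finset.univ (j₂ j) (fun l => R i l * Real.sin (θ j))]
    simp only [Finset.mem_univ, if_true]
    have hR1 : R i (j₁ j) = U' i j := by
      have h := hbv (j₁ j) (hj₁s j) i
      rw [hRdef]; simpa [h] using hv₁ j i
    have hMapp : M i j = V' i j - U' i j * Real.cos (θ j) := by
      rw [hMdef, Matrix.sub_apply, hCdef, Matrix.mul_diagonal]
    by_cases hs : Real.sin (θ j) = 0
    · have hM0 := hMzero j hs i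
      rw [hs, hR1]
      rw [hMapp] at hM0
      linarith [hM0]
    · have hR2 : R i (j₂ j) = X i j := by
        have h := hbv (j₂ j) (hj₂s j hs) i
        rw [hRdef]; simpa [h] using hv₂ j i
      have hXapp : X i j = M i j * (Real.sin (θ j))⁻¹ := by
        rw [hXdef, hDdef, Matrix.mul_diagonal, if_neg hs]
      rw [hR1, hR2, hXapp, hMapp]
      field_simp
      ring
  -- projector identities
  have hPU : P = U' * U'ᵀ := by
    rw [hP, hU'def, Matrix.transpose_mul]
    calc U * Uᵀ = U * (W₁ * W₁ᵀ) * Uᵀ := by rw [hW₁₂, Matrix.mul_one]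
      _ = U * W₁ * (W₁ᵀ * Uᵀ) := by simp only [Matrix.mul_assoc]
  have hQV : Q = V' * V'ᵀ := by
    rw [hQ, hV'def, Matrix.transpose_mul]
    calc V * Vᵀ = V * (W₂ * W₂ᵀ) * Vᵀ := by rw [hW₂₂, Matrix.mul_one]
      _ = V * W₂ * (W₂ᵀ * Vᵀ) := by simp only [Matrix.mul_assoc]
  have goal1 : Rᵀ * P * R = EE * EEᵀ := by
    calc Rᵀ * P * R = (Rᵀ * R) * EE * (EEᵀ * (Rᵀ * R)) := by
          rw [hPU, ← hRE, Matrix.transpose_mul]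
          simp only [Matrix.mul_assoc]
      _ = EE * EEᵀ := by rw [hRR]; simp
  have goal2 : Rᵀ * Q * R = WW * WWᵀ := by
    calc Rᵀ * Q * R = (Rᵀ * R) * WW * (WWᵀ * (Rᵀ * R)) := by
          rw [hQV, ← hRW, Matrix.transpose_mul]
          simp only [Matrix.mul_assoc]
      _ = WW * WWᵀ := by rw [hRR]; simp
  exact ⟨R, hmem, goal1, goal2⟩
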